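/- Every nonzero element of the subgroup of (ℤ/9ℤ)⁴ generated by (0,0,1,6), (0,1,1,1), and (1,0,0,2) has Mannheim weight at least 3, and this bound is attained; hence the minimum Mannheim distance of this code is 3. -/

import Mathlib

/-- Mannheim weight on (ℤ/9ℤ)⁴, using representatives in {-4,…,4}. -/
def wt (v : Fin 4 → ZMod 9) : ℤ := ∑ i, |(v i).valMinAbs|

def C : AddSubgroup (Fin 4 → ZMod 9) :=
  AddSubgroup.closure {![0,0,1,6], ![0,1,1,1], ![1,0,0,2]}

lemma mem_C_rep {v : Fin 4 → ZMod 9} (hv : v ∈ C) :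
    ∃ a b c : ZMod 9, v = a • ![(0:ZMod 9),0,1,6] + b • ![0,1,1,1] + c • ![1,0,0,2] := by
  induction hv using AddSubgroup.closure_induction with
  | mem x hx =>
    simp only [Set.mem_insert_iff, Set.mem_singleton_iff] at hx
    rcases hx with h | h | h
    · exact ⟨1, 0, 0, by simp [h]⟩
    · exact ⟨0, 1, 0, by simp [h]⟩
    · exact ⟨0, 0, 1, by simp [h]⟩
  | zero => exact ⟨0, 0, 0, by simp⟩
  | add x y _ _ hx hy =>
    obtain ⟨a, b, c, rfl⟩ := hx
    obtain ⟨a', b', c', rfl⟩ := hy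
    exact ⟨a + a', b + b', c + c', by module⟩
  | neg x _ hx =>
    obtain ⟨a, b, c, rfl⟩ := hx
    exact ⟨-a, -b, -c, by module⟩

lemma key : ∀ a b c : ZMod 9,
    (a • ![(0:ZMod 9),0,1,6] + b • ![0,1,1,1] + c • ![1,0,0,2] ≠ 0) →
    3 ≤ wt (a • ![(0:ZMod 9),0,1,6] + b • ![0,1,1,1] + c • ![1,0,0,2]) := by
  decide

theorem min_mannheim_distance_eq_three :
    (∀ v ∈ C, v ≠ 0 → 3 ≤ wt v) ∧ (∃ v ∈ C, v ≠ 0 ∧ wt v = 3) := by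
  constructor
  · intro v hv hne
    obtain ⟨a, b, c, rfl⟩ := mem_C_rep hv
    exact key a b c hne
  · refine ⟨![0,1,1,1], AddSubgroup.subset_closure (by simp), ?_, ?_⟩
    · decide
    · decide
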